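/- Let H be an N×M complex matrix, σ² > 0, and D an M×M Hermitian matrix. If the supremum over all M×M Hermitian positive semidefinite matrices S of the quantity log₂ det(I_N + (1/σ²) H S Hᴴ) − tr(D S) is finite (bounded from above), then D is positive semidefinite and the range (column space) of Hᴴ is contained in the range of D. -/

import Mathlib

open Matrix ComplexOrder

/-- The Lagrangian-style objective `log₂ det(I_N + (1/σ²) H S Hᴴ) − tr(D S)`
(both quantities are real for Hermitian `D` and PSD `S`; we take real parts). -/
noncomputable def dualObj {N M : ℕ} (H : Matrix (Fin N) (Fin M) ℂ) (σ2 : ℝ)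
    (D : Matrix (Fin M) (Fin M) ℂ) (S : Matrix (Fin M) (Fin M) ℂ) : ℝ :=
  Real.logb 2 ((1 + σ2⁻¹ • (H * S * Hᴴ)).det.re) - ((D * S).trace).re

section Aux

variable {N M : ℕ}

lemma outer_psd (v : Fin M → ℂ) (t : ℝ) (ht : 0 ≤ t) :
    ((t : ℂ) • vecMulVec v (star v)).PosSemidef := by
  rw [posSemidef_iff_dotProduct_mulVec]
  constructor
  · ext i j
    simp [vecMulVec_apply, conjTranspose_apply, Complex.conj_ofReal]
    ring_nf
    tauto
  · intro x
    have h1 : (vecMulVec v (star v)) *ᵥ x = (star v ⬝ᵥ x) • v := by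
      ext i
      simp [vecMulVec_apply, mulVec, dotProduct, Finset.mul_sum, mul_assoc, mul_comm,
        mul_left_comm]
    rw [smul_mulVec, h1, dotProduct_smul, dotProduct_smul]
    have h2 : star x ⬝ᵥ v = star (star v ⬝ᵥ x) := by
      simp [dotProduct, mul_comm]
    rw [smul_eq_mul, smul_eq_mul, h2]
    have ht' : (0:ℂ) ≤ (t:ℂ) := Complex.zero_le_real.2 ht
    exact mul_nonneg ht' (mul_star_self_nonneg _)

lemma mul_outer_mul (H : Matrix (Fin N) (Fin M) ℂ) (v : Fin M → ℂ) :
    H * vecMulVec v (star v) * Hᴴ = vecMulVec (H *ᵥ v) (star (H *ᵥ v)) := by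
  ext i j
  simp only [mul_apply, vecMulVec_apply, mulVec, dotProduct, conjTranspose_apply,
    Pi.star_apply, Finset.sum_mul, Finset.mul_sum, star_sum, star_mul']
  congr 1; ext k; congr 1; ext l; ring

lemma trace_mul_outer (D : Matrix (Fin M) (Fin M) ℂ) (v : Fin M → ℂ) :
    (D * vecMulVec v (star v)).trace = star v ⬝ᵥ D *ᵥ v := by
  simp only [trace, diag_apply, mul_apply, vecMulVec_apply, dotProduct, mulVec,
    Finset.mul_sum, Pi.star_apply]
  congr 1; ext i; congr 1; ext j; ring

lemma dualObj_outer (H : Matrix (Fin N) (Fin M) ℂ) (σ2 : ℝ)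
    (D : Matrix (Fin M) (Fin M) ℂ) (v : Fin M → ℂ) (t : ℝ) :
    dualObj H σ2 D ((t : ℂ) • vecMulVec v (star v)) =
      Real.logb 2 (1 + σ2⁻¹ * t * (star (H *ᵥ v) ⬝ᵥ (H *ᵥ v)).re)
        - t * (star v ⬝ᵥ D *ᵥ v).re := by
  have hq : (0:ℂ) ≤ star (H *ᵥ v) ⬝ᵥ (H *ᵥ v) := dotProduct_star_self_nonneg _
  have hqim : (star (H *ᵥ v) ⬝ᵥ (H *ᵥ v)).im = 0 := by
    rw [Complex.le_def] at hq; exact hq.2.symm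
  have h1 : H * ((t : ℂ) • vecMulVec v (star v)) * Hᴴ
      = (t : ℂ) • vecMulVec (H *ᵥ v) (star (H *ᵥ v)) := by
    rw [Matrix.mul_smul, Matrix.smul_mul, mul_outer_mul]
  have h2 : σ2⁻¹ • ((t : ℂ) • vecMulVec (H *ᵥ v) (star (H *ᵥ v)))
      = vecMulVec (((σ2⁻¹ * t : ℝ) : ℂ) • (H *ᵥ v)) (star (H *ᵥ v)) := by
    ext i j
    simp [vecMulVec_apply, Matrix.smul_apply, Pi.smul_apply, smul_eq_mul,
      Complex.real_smul]
    ring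
  have hdet : (1 + σ2⁻¹ • (H * ((t : ℂ) • vecMulVec v (star v)) * Hᴴ)).det
      = 1 + ((σ2⁻¹ * t : ℝ) : ℂ) * (star (H *ᵥ v) ⬝ᵥ (H *ᵥ v)) := by
    rw [h1, h2, vecMulVec_eq Unit, det_one_add_replicateCol_mul_replicateRow]
    rw [dotProduct_smul, smul_eq_mul]
  have htr : ((D * ((t : ℂ) • vecMulVec v (star v))).trace)
      = (t : ℂ) * (star v ⬝ᵥ D *ᵥ v) := by
    rw [Matrix.mul_smul, trace_smul, trace_mul_outer, smul_eq_mul]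
  unfold dualObj
  rw [hdet, htr]
  congr 1
  · congr 1
    simp [Complex.add_re, Complex.mul_re, hqim, mul_assoc]
  · simp [Complex.mul_re]

end Aux

/-- Lemma 1: if `sup_{S ⪰ 0} [log₂ det(I + (1/σ²) H S Hᴴ) − tr(DS)]`
is bounded from above, then `D ⪰ 0` and `range(Hᴴ) ⊆ range(D)`. -/
theorem stmt_0 {N M : ℕ} (H : Matrix (Fin N) (Fin M) ℂ) (σ2 : ℝ) (hσ2 : 0 < σ2)
    (D : Matrix (Fin M) (Fin M) ℂ) (hD : D.IsHermitian)
    (hbdd : ∃ B : ℝ, ∀ S : Matrix (Fin M) (Fin M) ℂ, S.PosSemidef →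
      dualObj H σ2 D S ≤ B) :
    D.PosSemidef ∧
      LinearMap.range (Hᴴ).mulVecLin ≤ LinearMap.range D.mulVecLin := by
  obtain ⟨B, hB⟩ := hbdd
  have hc : (0:ℝ) < σ2⁻¹ := inv_pos.2 hσ2
  -- the quadratic form of a Hermitian matrix is real
  have hform : ∀ v : Fin M → ℂ, (star v ⬝ᵥ D *ᵥ v).im = 0 := by
    intro v
    have h1 : star (star v ⬝ᵥ D *ᵥ v) = star v ⬝ᵥ D *ᵥ v := by
      calc star (star v ⬝ᵥ D *ᵥ v) = star (D *ᵥ v) ⬝ᵥ v := by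
              simp [dotProduct, mul_comm]
        _ = (star v ᵥ* Dᴴ) ⬝ᵥ v := by rw [star_mulVec]
        _ = (star v ᵥ* D) ⬝ᵥ v := by rw [hD.eq]
        _ = star v ⬝ᵥ D *ᵥ v := by rw [← dotProduct_mulVec]
    exact Complex.conj_eq_iff_im.mp h1
  -- the key inequality from boundedness
  have key : ∀ (v : Fin M → ℂ) (t : ℝ), 0 ≤ t →
      Real.logb 2 (1 + σ2⁻¹ * t * (star (H *ᵥ v) ⬝ᵥ (H *ᵥ v)).re)
        - t * (star v ⬝ᵥ D *ᵥ v).re ≤ B := by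
    intro v t ht
    rw [← dualObj_outer]
    exact hB _ (outer_psd v t ht)
  have hqre : ∀ w : Fin N → ℂ, 0 ≤ (star w ⬝ᵥ w).re := by
    intro w
    have := dotProduct_star_self_nonneg w
    rw [Complex.le_def] at this
    simpa using this.1
  have hlognn : ∀ (v : Fin M → ℂ) (t : ℝ), 0 ≤ t →
      0 ≤ Real.logb 2 (1 + σ2⁻¹ * t * (star (H *ᵥ v) ⬝ᵥ (H *ᵥ v)).re) := by
    intro v t ht
    apply Real.logb_nonneg (by norm_num)
    have h0 : 0 ≤ σ2⁻¹ * t * (star (H *ᵥ v) ⬝ᵥ (H *ᵥ v)).re :=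
      mul_nonneg (mul_nonneg hc.le ht) (hqre _)
    linarith
  -- D is positive semidefinite
  have hPSD : D.PosSemidef := by
    refine posSemidef_iff_dotProduct_mulVec.mpr ⟨hD, fun v => ?_⟩
    rw [Complex.le_def]
    refine ⟨?_, by simpa using (hform v).symm⟩
    simp only [Complex.zero_re]
    by_contra hneg
    push_neg at hneg
    set r : ℝ := (star v ⬝ᵥ D *ᵥ v).re with hr
    have hr0 : r < 0 := hneg
    -- B ≥ 0 since S = 0 gives value 0
    have hB0 : (0:ℝ) ≤ B := by
      have := hB 0 Matrix.PosSemidef.zero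
      simpa [dualObj] using this
    set t : ℝ := (B + 1) / (-r) with htdef
    have ht : 0 < t := div_pos (by linarith) (by linarith)
    have hkey := key v t ht.le
    have h1 : t * (-r) = B + 1 := by
      rw [htdef]; exact div_mul_cancel₀ _ (by linarith)
    have htr : t * r = -(B + 1) := by
      have h2 : t * r = -(t * (-r)) := by ring
      rw [h2, h1]
    have hlog := hlognn v t ht.le
    linarith
  refine ⟨hPSD, ?_⟩
  -- kernel of D is contained in kernel of H
  have hker : ∀ v : Fin M → ℂ, D *ᵥ v = 0 → H *ᵥ v = 0 := by
    intro v hv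
    by_contra hHv
    set q : ℝ := (star (H *ᵥ v) ⬝ᵥ (H *ᵥ v)).re with hq
    have hq0 : 0 < q := by
      rcases lt_or_eq_of_le (hqre (H *ᵥ v)) with h | h
      · exact h
      · exfalso
        apply hHv
        apply dotProduct_star_self_eq_zero.mp
        have him : (star (H *ᵥ v) ⬝ᵥ (H *ᵥ v)).im = 0 := by
          have := dotProduct_star_self_nonneg (H *ᵥ v)
          rw [Complex.le_def] at this
          simpa using this.2.symm
        exact Complex.ext (by simpa using h.symm) (by simpa using him)
    have htr0 : (star v ⬝ᵥ D *ᵥ v).re = 0 := by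
      rw [hv]; simp
    set t : ℝ := (2:ℝ) ^ (B + 1) / (σ2⁻¹ * q) with htdef
    have ht : 0 < t :=
      div_pos (Real.rpow_pos_of_pos (by norm_num) _) (mul_pos hc hq0)
    have hkey := key v t ht.le
    rw [htr0, mul_zero, sub_zero] at hkey
    have hval : σ2⁻¹ * t * q = (2:ℝ) ^ (B + 1) := by
      rw [htdef]
      field_simp
    rw [mul_comm σ2⁻¹ t] at hval
    have harg : (2:ℝ) ^ (B + 1) ≤ 1 + σ2⁻¹ * t * q := by
      rw [mul_comm σ2⁻¹ t, hval]; linarith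
    have hmono : Real.logb 2 ((2:ℝ) ^ (B + 1)) ≤
        Real.logb 2 (1 + σ2⁻¹ * t * q) :=
      Real.logb_le_logb_of_le (by norm_num) (Real.rpow_pos_of_pos (by norm_num) _) harg
    rw [Real.logb_rpow (by norm_num) (by norm_num)] at hmono
    linarith
  -- now linear algebra: range Hᴴ ≤ range D
  set R := LinearMap.range D.mulVecLin with hR
  set K := LinearMap.ker D.mulVecLin with hK
  -- range and kernel are "orthogonal"
  have horth : ∀ x ∈ R, ∀ k ∈ K, star k ⬝ᵥ x = 0 := by
    intro x hx k hk
    obtain ⟨w, hw⟩ := hx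
    rw [LinearMap.mem_ker, Matrix.mulVecLin_apply] at hk
    rw [Matrix.mulVecLin_apply] at hw
    subst hw
    rw [dotProduct_mulVec]
    have h5 : star k ᵥ* D = star (D *ᵥ k) := by
      conv_rhs => rw [← hD.eq]
      rw [star_mulVec, conjTranspose_conjTranspose]
    rw [h5, hk]
    simp
  -- R ⊓ K = ⊥
  have hinf : R ⊓ K = ⊥ := by
    rw [Submodule.eq_bot_iff]
    intro x hx
    have h1 : star x ⬝ᵥ x = 0 := horth x hx.1 x hx.2
    exact dotProduct_star_self_eq_zero.mp h1
  -- R ⊔ K = ⊤ by dimension count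
  have hsup : R ⊔ K = ⊤ := by
    apply Submodule.eq_top_of_finrank_eq
    have h1 := Submodule.finrank_sup_add_finrank_inf_eq R K
    have h2 := LinearMap.finrank_range_add_finrank_ker D.mulVecLin
    rw [hinf] at h1
    simp only [finrank_bot, add_zero] at h1
    rw [h1, h2]
  intro y hy
  obtain ⟨x, hx⟩ := hy
  rw [Matrix.mulVecLin_apply] at hx
  -- decompose y = r + k
  have hy' : y ∈ R ⊔ K := hsup ▸ Submodule.mem_top
  rw [Submodule.mem_sup] at hy'
  obtain ⟨r, hrR, k, hkK, hrk⟩ := hy'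
  -- y is orthogonal to all of K
  have hyorth : ∀ k' ∈ K, star k' ⬝ᵥ y = 0 := by
    intro k' hk'
    rw [LinearMap.mem_ker, Matrix.mulVecLin_apply] at hk'
    have hHk : H *ᵥ k' = 0 := hker k' hk'
    rw [← hx, dotProduct_mulVec, ← star_mulVec, hHk]
    simp
  -- hence k = 0
  have hk0 : k = 0 := by
    apply dotProduct_star_self_eq_zero.mp
    have h1 : star k ⬝ᵥ y = 0 := hyorth k hkK
    have h2 : star k ⬝ᵥ r = 0 := horth r hrR k hkK
    have h3 : star k ⬝ᵥ (r + k) = 0 := by rw [hrk]; exact h1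
    rw [dotProduct_add, h2, zero_add] at h3
    exact h3
  rw [hk0, add_zero] at hrk
  rw [← hrk]
  exact hrR
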